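/- Correctness of the stopping condition for the top-k generator: fix 1 ≤ i ≤ n and k ≥ 1, and suppose T ⊆ {1,…,i} is a set of k tuple indices such that tkp_k(t) ≥ Σ_{j=0}^{k−1} r_{i,j} for every t ∈ T. Then for every t ∈ T and every unseen index s with i < s ≤ n, tkp_k(t) ≥ tkp_k(s); consequently no tuple among {t_{i+1},…,t_n} can have a strictly larger top-k probability than any member of T, and T is a valid answer to the Global Top-k query provided its members have the k highest top-k probabilities among {t_1,…,t_i}. -/

import Mathlib

open Finset
open scoped Classical

/-- Poisson-binomial probability of exactly `j` successes among independent
events indexed by `A`, with success probabilities `q`. -/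
noncomputable def PB {α : Type*} [DecidableEq α] (A : Finset α) (q : α → ℝ) (j : ℕ) : ℝ :=
  ∑ T ∈ A.powersetCard j, (∏ a ∈ T, q a) * ∏ a ∈ A \ T, (1 - q a)

/-- Probability of a possible world `S` of the full x-Relation. -/
noncomputable def worldProb {n m : ℕ} (g : Fin n → Fin m) (p : Fin n → ℝ)
    (S : Finset (Fin n)) : ℝ :=
  (∏ t ∈ S, p t) *
    ∏ a ∈ Finset.univ.filter (fun a : Fin m => ∀ t ∈ S, g t ≠ a),
      (1 - ∑ t ∈ Finset.univ.filter (fun t : Fin n => g t = a), p t)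

/-- `rho g p i a` = existence probability of x-tuple `a` projected to the reduced
relation on the top `i` tuples (`i` is a 1-based count, tuples are 0-based). -/
noncomputable def rho {n m : ℕ} (g : Fin n → Fin m) (p : Fin n → ℝ) (i : ℕ) (a : Fin m) : ℝ :=
  ∑ t ∈ Finset.univ.filter (fun t : Fin n => (t : ℕ) < i ∧ g t = a), p t

/-- Probability of a possible world `S` of the reduced relation on the top `i` tuples. -/
noncomputable def worldProbI {n m : ℕ} (g : Fin n → Fin m) (p : Fin n → ℝ) (i : ℕ)
    (S : Finset (Fin n)) : ℝ :=
  (∏ t ∈ S, p t) *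
    ∏ a ∈ Finset.univ.filter (fun a : Fin m => ∀ t ∈ S, g t ≠ a), (1 - rho g p i a)

/-- `pij g p i j` = probability that tuple `i` is ranked at the `j`-th position
(`j ≥ 1`) across all possible worlds: the sum of `worldProb` over possible worlds
containing `i` together with exactly `j - 1` higher-score tuples. -/
noncomputable def pij {n m : ℕ} (g : Fin n → Fin m) (p : Fin n → ℝ) (i : Fin n) (j : ℕ) : ℝ :=
  ∑ S ∈ Finset.univ.filter (fun S : Finset (Fin n) =>
      Set.InjOn g ↑S ∧ i ∈ S ∧ (S.filter (fun t => (t : ℕ) < (i : ℕ))).card = j - 1),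
    worldProb g p S

/-- `tkp g p k i` = top-`k` probability of tuple `i`. -/
noncomputable def tkp {n m : ℕ} (g : Fin n → Fin m) (p : Fin n → ℝ) (k : ℕ) (i : Fin n) : ℝ :=
  ∑ j ∈ Finset.Icc 1 k, pij g p i j

noncomputable def wgt {n m : ℕ} (g : Fin n → Fin m) (p : Fin n → ℝ) (a : Fin m) :
    Option (Fin n) → ℝ
  | none => 1 - ∑ t ∈ Finset.univ.filter (fun t : Fin n => g t = a), p t
  | some t => p t

noncomputable def choices {n m : ℕ} (g : Fin n → Fin m) (i : ℕ) (U : Finset (Fin m))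
    (a : Fin m) : Finset (Option (Fin n)) :=
  if a ∈ U then (Finset.univ.filter (fun t : Fin n => (t : ℕ) < i ∧ g t = a)).image some
  else insert none ((Finset.univ.filter (fun t : Fin n => i ≤ (t : ℕ) ∧ g t = a)).image some)

lemma choiceSum {n m : ℕ} (g : Fin n → Fin m) (p : Fin n → ℝ) (i : ℕ) (U : Finset (Fin m))
    (a : Fin m) :
    ∑ c ∈ choices g i U a, wgt g p a c =
      if a ∈ U then rho g p i a else 1 - rho g p i a := by
  unfold choices
  split_ifs with h
  · rw [Finset.sum_image (fun x _ y _ h => Option.some_injective _ h)]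
    rfl
  · rw [Finset.sum_insert (by simp),
      Finset.sum_image (fun x _ y _ h => Option.some_injective _ h)]
    have hsplit : ∑ t ∈ Finset.univ.filter (fun t : Fin n => g t = a), p t
        = rho g p i a + ∑ t ∈ Finset.univ.filter (fun t : Fin n => i ≤ (t : ℕ) ∧ g t = a), p t := by
      rw [rho, ← Finset.sum_filter_add_sum_filter_not (Finset.univ.filter (fun t : Fin n => g t = a))
        (fun t => (t : ℕ) < i)]
      congr 1
      · congr 1; ext t; simp [and_comm]
      · congr 1; ext t; simp [and_comm, not_lt]
    show (1 - ∑ t ∈ Finset.univ.filter (fun t : Fin n => g t = a), p t)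
        + ∑ t ∈ Finset.univ.filter (fun t : Fin n => i ≤ (t : ℕ) ∧ g t = a), p t
        = 1 - rho g p i a
    rw [hsplit]; ring

lemma fiberSum {n m : ℕ} (g : Fin n → Fin m) (p : Fin n → ℝ) (i : ℕ) (U : Finset (Fin m)) :
    ∑ S ∈ Finset.univ.filter (fun S : Finset (Fin n) =>
        Set.InjOn g ↑S ∧ (S.filter (fun t : Fin n => (t : ℕ) < i)).image g = U),
      worldProb g p S
      = (∏ a ∈ U, rho g p i a) * ∏ a ∈ Finset.univ \ U, (1 - rho g p i a) := by
  classical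
  -- RHS as a product over univ of per-x-tuple choice sums
  have hR : (∏ a : Fin m, ∑ c ∈ choices g i U a, wgt g p a c)
      = (∏ a ∈ U, rho g p i a) * ∏ a ∈ Finset.univ \ U, (1 - rho g p i a) := by
    rw [← Finset.prod_sdiff (Finset.subset_univ U), mul_comm]
    congr 1
    · exact Finset.prod_congr rfl fun a ha => by rw [choiceSum, if_pos ha]
    · exact Finset.prod_congr rfl fun a ha => by rw [choiceSum, if_neg (Finset.mem_sdiff.1 ha).2]
  rw [← hR, Finset.prod_univ_sum]
  symm
  -- now a bijection between piFinset (choices g i U) and the fiber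
  set Φ : (Fin m → Option (Fin n)) → Finset (Fin n) :=
    fun f => Finset.univ.filter (fun t => f (g t) = some t) with hΦ
  have hopt : ∀ f ∈ Fintype.piFinset (choices g i U), ∀ a t, f a = some t →
      g t = a ∧ ((t : ℕ) < i ↔ a ∈ U) := by
    intro f hf a t hat
    have := Fintype.mem_piFinset.1 hf a
    rw [hat] at this
    unfold choices at this
    by_cases h : a ∈ U
    · rw [if_pos h] at this
      simp only [Finset.mem_image, Finset.mem_filter, Finset.mem_univ, true_and] at this
      obtain ⟨t', ⟨ht1, ht2⟩, ht3⟩ := this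
      obtain rfl := Option.some_injective _ ht3
      exact ⟨ht2, by simp [h, ht1]⟩
    · rw [if_neg h] at this
      simp only [Finset.mem_insert, Finset.mem_image, Finset.mem_filter, Finset.mem_univ,
        true_and, reduceCtorEq, false_or] at this
      obtain ⟨t', ⟨ht1, ht2⟩, ht3⟩ := this
      obtain rfl := Option.some_injective _ ht3
      exact ⟨ht2, by simp [h]; omega⟩
  have hmemΦ : ∀ f t, t ∈ Φ f ↔ f (g t) = some t := by
    intro f t; simp [hΦ]
  refine Finset.sum_bij (fun f _ => Φ f) ?_ ?_ ?_ ?_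
  · -- membership
    intro f hf
    simp only [Finset.mem_filter, Finset.mem_univ, true_and]
    constructor
    · intro t₁ ht₁ t₂ ht₂ hgt
      rw [Finset.mem_coe, hmemΦ] at ht₁ ht₂
      have h1 := ht₁
      have h2 := ht₂
      rw [hgt, h2] at h1
      exact Option.some_injective _ h1.symm
    · ext a
      simp only [Finset.mem_image, Finset.mem_filter, Finset.mem_univ, true_and]
      constructor
      · rintro ⟨t, ⟨ht, hti⟩, rfl⟩
        have := (hmemΦ f t).1 (by simpa using ht)
        exact ((hopt f hf _ t this).2).1 hti
      · intro ha
        have := Fintype.mem_piFinset.1 hf a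
        unfold choices at this
        rw [if_pos ha] at this
        simp only [Finset.mem_image, Finset.mem_filter, Finset.mem_univ, true_and] at this
        obtain ⟨t, ⟨ht1, ht2⟩, ht3⟩ := this
        refine ⟨t, ⟨?_, ht1⟩, ht2⟩
        rw [hmemΦ, ht2]
        exact ht3.symm
  · -- injectivity
    have key : ∀ f₁ ∈ Fintype.piFinset (choices g i U), ∀ f₂ ∈ Fintype.piFinset (choices g i U),
        Φ f₁ = Φ f₂ → ∀ a t, f₁ a = some t → f₂ a = some t := by
      intro f₁ hf₁ f₂ hf₂ heq a t hat
      have hga := (hopt f₁ hf₁ a t hat).1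
      have : t ∈ Φ f₁ := by rw [hmemΦ, hga]; exact hat
      rw [heq, hmemΦ, hga] at this
      exact this
    intro f₁ hf₁ f₂ hf₂ heq
    funext a
    cases h1 : f₁ a with
    | none =>
      cases h2 : f₂ a with
      | none => rfl
      | some t => exact absurd (key f₂ hf₂ f₁ hf₁ heq.symm a t h2) (by simp [h1])
    | some t => exact (key f₁ hf₁ f₂ hf₂ heq a t h1).symm
  · -- surjectivity
    intro S hS
    simp only [Finset.mem_filter, Finset.mem_univ, true_and] at hS
    obtain ⟨hinj, himg⟩ := hS
    set f : Fin m → Option (Fin n) :=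
      fun a => if h : ∃ t, t ∈ S ∧ g t = a then some h.choose else none with hf
    have hfa : ∀ a t, t ∈ S → g t = a → f a = some t := by
      intro a t ht hgt
      have hex : ∃ t', t' ∈ S ∧ g t' = a := ⟨t, ht, hgt⟩
      have hspec := hex.choose_spec
      have : hex.choose = t := hinj hspec.1 ht (by rw [hspec.2, hgt])
      simp [hf, dif_pos hex, this]
    have hΦf : Φ f = S := by
      ext t
      rw [hmemΦ]
      constructor
      · intro h
        by_cases hex : ∃ t', t' ∈ S ∧ g t' = g t
        · have := hex.choose_spec
          simp only [hf, dif_pos hex] at h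
          exact (Option.some_injective _ h) ▸ this.1
        · simp [hf, dif_neg hex] at h
      · intro ht
        exact hfa (g t) t ht rfl
    refine ⟨f, ?_, hΦf⟩
    rw [Fintype.mem_piFinset]
    intro a
    unfold choices
    by_cases hex : ∃ t, t ∈ S ∧ g t = a
    · obtain ⟨t, ht, hgt⟩ := hex
      have hfa' := hfa a t ht hgt
      by_cases hU : a ∈ U
      · rw [if_pos hU]
        rw [← himg] at hU
        simp only [Finset.mem_image, Finset.mem_filter] at hU
        obtain ⟨t', ⟨ht'S, ht'i⟩, hgt'⟩ := hU
        have hte : t' = t := hinj ht'S ht (by rw [hgt', hgt])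
        have hti : (t : ℕ) < i := hte ▸ ht'i
        rw [hfa']
        simp only [Finset.mem_image, Finset.mem_filter, Finset.mem_univ, true_and]
        exact ⟨t, ⟨hti, hgt⟩, rfl⟩
      · rw [if_neg hU]
        have hti : i ≤ (t : ℕ) := by
          by_contra hlt
          push_neg at hlt
          rw [← himg] at hU
          exact hU (Finset.mem_image.2 ⟨t, Finset.mem_filter.2 ⟨ht, hlt⟩, hgt⟩)
        rw [hfa']
        simp only [Finset.mem_insert, Finset.mem_image, Finset.mem_filter, Finset.mem_univ,
          true_and]
        exact Or.inr ⟨t, ⟨hti, hgt⟩, rfl⟩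
    · have hfnone : f a = none := by simp [hf, dif_neg hex]
      have hU : a ∉ U := by
        rw [← himg]
        simp only [Finset.mem_image, Finset.mem_filter]
        rintro ⟨t, ⟨htS, _⟩, hgt⟩
        exact hex ⟨t, htS, hgt⟩
      rw [if_neg hU, hfnone]
      exact Finset.mem_insert_self _ _
  · -- values agree
    intro f hf
    set S := Φ f with hSdef
    have hmem : ∀ t, t ∈ S ↔ f (g t) = some t := hmemΦ f
    have himg : ∀ a, a ∈ S.image g ↔ ∃ t, f a = some t := by
      intro a
      simp only [Finset.mem_image]
      constructor
      · rintro ⟨t, ht, rfl⟩; exact ⟨t, (hmem t).1 ht⟩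
      · rintro ⟨t, hat⟩
        have hga := (hopt f hf a t hat).1
        exact ⟨t, (hmem t).2 (by rw [hga]; exact hat), hga⟩
    have hfilter : Finset.univ.filter (fun a : Fin m => ∀ t ∈ S, g t ≠ a)
        = Finset.univ \ S.image g := by
      ext a
      simp only [Finset.mem_filter, Finset.mem_univ, true_and, Finset.mem_sdiff,
        Finset.mem_image, not_exists, not_and]
    have hinjS : ∀ t₁ ∈ S, ∀ t₂ ∈ S, g t₁ = g t₂ → t₁ = t₂ := by
      intro t₁ h₁ t₂ h₂ hg
      have e1 := (hmem t₁).1 h₁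
      have e2 := (hmem t₂).1 h₂
      rw [hg, e2] at e1
      exact Option.some_injective _ e1.symm
    rw [worldProb, hfilter]
    rw [← Finset.prod_sdiff (Finset.subset_univ (S.image g)), mul_comm]
    congr 1
    · rw [Finset.prod_image hinjS]
      apply Finset.prod_congr rfl
      intro t ht
      rw [(hmem t).1 ht]
      rfl
    · apply Finset.prod_congr rfl
      intro a ha
      have : f a = none := by
        rcases h : f a with _ | t
        · rfl
        · exact absurd ((himg a).2 ⟨t, h⟩) (Finset.mem_sdiff.1 ha).2
      rw [this]; rfl

lemma filter_cast_card {n : ℕ} (S : Finset (Fin n)) (c : ℕ) :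
    (S.filter (fun t => (t : ℕ) < c)).card = (S.filter (fun t : Fin n => (t : ℕ) < c)).card := by
  have h : (do let a ← S; pure ((a : ℕ)) : Finset ℕ) = S.image Fin.val := by
    ext x
    simp only [Bind.bind, Finset.sup_eq_biUnion, Finset.mem_biUnion, Finset.mem_image]
    constructor
    · rintro ⟨a, ha, hx⟩; simp only [Pure.pure, Finset.mem_singleton] at hx; exact ⟨a, ha, hx.symm⟩
    · rintro ⟨a, ha, hx⟩; exact ⟨a, ha, by simp [Pure.pure, hx]⟩
  show ((do let a ← S; pure ((a : ℕ)) : Finset ℕ).filter (fun t => t < c)).card = _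
  rw [h, Finset.filter_image]
  rw [Finset.card_image_of_injOn (Fin.val_injective.injOn)]

lemma worldProb_nonneg {n m : ℕ} (g : Fin n → Fin m) (p : Fin n → ℝ)
    (hp : ∀ t, 0 ≤ p t)
    (hsum : ∀ a : Fin m, ∑ t ∈ Finset.univ.filter (fun t : Fin n => g t = a), p t ≤ 1)
    (S : Finset (Fin n)) : 0 ≤ worldProb g p S :=
  mul_nonneg (Finset.prod_nonneg fun t _ => hp t)
    (Finset.prod_nonneg fun a _ => sub_nonneg.2 (hsum a))

lemma unseen_bound {n m : ℕ} (g : Fin n → Fin m) (p : Fin n → ℝ)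
    (hp : ∀ t, 0 ≤ p t)
    (hsum : ∀ a : Fin m, ∑ t ∈ Finset.univ.filter (fun t : Fin n => g t = a), p t ≤ 1)
    (i k : ℕ) (s : Fin n) (hs : i ≤ (s : ℕ)) :
    tkp g p k s ≤ ∑ j ∈ Finset.range k, PB Finset.univ (rho g p i) j := by
  classical
  set W := Finset.univ.filter (fun S : Finset (Fin n) =>
    Set.InjOn g ↑S ∧ ((S.filter (fun t : Fin n => (t : ℕ) < i)).image g).card < k) with hW
  have hA : tkp g p k s ≤ ∑ S ∈ W, worldProb g p S := by
    set B := Finset.univ.filter (fun S : Finset (Fin n) =>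
      Set.InjOn g ↑S ∧ s ∈ S ∧ (S.filter (fun t : Fin n => (t : ℕ) < (s : ℕ))).card < k) with hB
    have hmap : ∀ S ∈ B, (S.filter (fun t : Fin n => (t : ℕ) < (s : ℕ))).card ∈ Finset.range k := by
      intro S hS
      rw [hB, Finset.mem_filter] at hS
      exact Finset.mem_range.2 hS.2.2.2
    have h1 : tkp g p k s = ∑ S ∈ B, worldProb g p S := by
      rw [tkp, ← Finset.sum_fiberwise_of_maps_to hmap (worldProb g p),
        show Finset.Icc 1 k = Finset.Ico 1 (k + 1) by rw [Finset.Ico_add_one_right_eq_Icc],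
        Finset.sum_Ico_eq_sum_range]
      apply Finset.sum_congr (by norm_num)
      intro j hj
      rw [Finset.mem_range] at hj
      rw [pij, hB, Finset.filter_filter]
      congr 1
      ext S
      simp only [Finset.mem_filter, Finset.mem_univ, true_and]
      rw [filter_cast_card]
      constructor
      · rintro ⟨h1, h2, h3⟩
        refine ⟨⟨h1, h2, ?_⟩, ?_⟩ <;> omega
      · rintro ⟨⟨h1, h2, _⟩, h4⟩
        exact ⟨h1, h2, by omega⟩
    have hBW : B ⊆ W := by
      intro S hS
      rw [hB, Finset.mem_filter] at hS
      obtain ⟨_, hinj, _, hcard⟩ := hS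
      rw [hW, Finset.mem_filter]
      refine ⟨Finset.mem_univ _, hinj, ?_⟩
      calc ((S.filter (fun t : Fin n => (t : ℕ) < i)).image g).card
          ≤ (S.filter (fun t : Fin n => (t : ℕ) < i)).card := Finset.card_image_le
        _ ≤ (S.filter (fun t : Fin n => (t : ℕ) < (s : ℕ))).card :=
            Finset.card_le_card (Finset.monotone_filter_right S fun t _ ht => lt_of_lt_of_le ht hs)
        _ < k := hcard
    rw [h1]
    exact Finset.sum_le_sum_of_subset_of_nonneg hBW
      (fun S _ _ => worldProb_nonneg g p hp hsum S)
  have hBeq : ∑ S ∈ W, worldProb g p S = ∑ j ∈ Finset.range k, PB Finset.univ (rho g p i) j := by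
    set 𝒰 := Finset.univ.powerset.filter (fun U : Finset (Fin m) => U.card < k) with h𝒰
    have hmap2 : ∀ S ∈ W, (S.filter (fun t : Fin n => (t : ℕ) < i)).image g ∈ 𝒰 := by
      intro S hS
      rw [hW, Finset.mem_filter] at hS
      rw [h𝒰, Finset.mem_filter, Finset.mem_powerset]
      exact ⟨Finset.subset_univ _, hS.2.2⟩
    rw [← Finset.sum_fiberwise_of_maps_to hmap2 (worldProb g p)]
    have hL : ∀ U ∈ 𝒰, ∑ S ∈ W.filter (fun S : Finset (Fin n) =>
        (S.filter (fun t : Fin n => (t : ℕ) < i)).image g = U), worldProb g p S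
        = (∏ a ∈ U, rho g p i a) * ∏ a ∈ Finset.univ \ U, (1 - rho g p i a) := by
      intro U hU
      rw [h𝒰, Finset.mem_filter] at hU
      rw [← fiberSum g p i U]
      congr 1
      rw [hW, Finset.filter_filter]
      ext S
      simp only [Finset.mem_filter, Finset.mem_univ, true_and]
      constructor
      · rintro ⟨⟨h1, _⟩, h3⟩; exact ⟨h1, h3⟩
      · rintro ⟨h1, h2⟩; exact ⟨⟨h1, h2 ▸ hU.2⟩, h2⟩
    rw [Finset.sum_congr rfl hL]
    have hmap3 : ∀ U ∈ 𝒰, U.card ∈ Finset.range k := by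
      intro U hU
      rw [h𝒰, Finset.mem_filter] at hU
      exact Finset.mem_range.2 hU.2
    rw [← Finset.sum_fiberwise_of_maps_to hmap3
      (fun U => (∏ a ∈ U, rho g p i a) * ∏ a ∈ Finset.univ \ U, (1 - rho g p i a))]
    apply Finset.sum_congr rfl
    intro j hj
    rw [Finset.mem_range] at hj
    rw [PB, Finset.powersetCard_eq_filter]
    congr 1
    rw [h𝒰, Finset.filter_filter]
    ext U
    simp only [Finset.mem_filter, Finset.mem_powerset]
    constructor
    · rintro ⟨h1, _, h3⟩; exact ⟨h1, h3⟩
    · rintro ⟨h1, h2⟩; exact ⟨h1, by omega, h2⟩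
  rw [← hBeq]
  exact hA

/-- Correctness of the stopping condition of the top-`k` generator: if every member
of a set `T` of `k` seen tuples (indices `< i`, i.e. among the top `i` tuples) has
top-`k` probability at least the upper bound `Σ_{j<k} r_{i,j}`, then no unseen tuple
(1-based index `> i`) can beat any member of `T`; consequently, if the members of `T`
moreover have the `k` highest top-`k` probabilities among the seen tuples, then `T`
is a valid Global Top-`k` answer (its members have the highest top-`k` probabilities
overall). -/
theorem stopping_condition_correct (n m : ℕ) (g : Fin n → Fin m) (p : Fin n → ℝ)
    (hp : ∀ t, 0 ≤ p t)
    (hsum : ∀ a : Fin m, ∑ t ∈ Finset.univ.filter (fun t : Fin n => g t = a), p t ≤ 1)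
    (i : ℕ) (hi1 : 1 ≤ i) (hi : i ≤ n) (k : ℕ) (hk : 1 ≤ k)
    (T : Finset (Fin n)) (hTseen : ∀ t ∈ T, (t : ℕ) < i) (hTcard : T.card = k)
    (hTbound : ∀ t ∈ T, ∑ j ∈ Finset.range k, PB Finset.univ (rho g p i) j ≤ tkp g p k t) :
    (∀ t ∈ T, ∀ s : Fin n, i ≤ (s : ℕ) → tkp g p k s ≤ tkp g p k t) ∧
    ((∀ t ∈ T, ∀ s : Fin n, (s : ℕ) < i → s ∉ T → tkp g p k s ≤ tkp g p k t) →
      ∀ t ∈ T, ∀ s : Fin n, s ∉ T → tkp g p k s ≤ tkp g p k t) := by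
  have hmain : ∀ s : Fin n, i ≤ (s : ℕ) →
      tkp g p k s ≤ ∑ j ∈ Finset.range k, PB Finset.univ (rho g p i) j :=
    fun s hs => unseen_bound g p hp hsum i k s hs
  constructor
  · intro t ht s hs
    exact le_trans (hmain s hs) (hTbound t ht)
  · intro hseen t ht s hsT
    by_cases h : (s : ℕ) < i
    · exact hseen t ht s h hsT
    · exact le_trans (hmain s (not_lt.1 h)) (hTbound t ht)
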